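/- Let P_f be the polymatroid of a monotone submodular function f with f(∅) = 0, with ground set E partitioned among n players, and let w : E → ℝ≥0 define linear homogeneous valuations v_i(x) = Σ_{t∈E_i} w_t·x_t. Let x* ∈ P_f maximize Σ_{t∈E} w_t·x_t over P_f. Let b : E → ℝ≥0 be any bid profile and let x ∈ P_f maximize Σ_{t∈E} b_t·x_t over P_f. For each player i, let b^i be the bid profile with b^i_t = (2/3)·w_t for t ∈ E_i and b^i_t = b_t otherwise, and let x^i ∈ P_f be any maximizer of Σ_{t∈E} b^i_t·x_t over P_f. Then Σ_{i=1}^n (1/3)·Σ_{t∈E_i} w_t·x^i_t ≥ (1/3)·Σ_{t∈E} w_t·x*_t − Σ_{t∈E} b_t·x_t. (The first-price greedy polymatroid mechanism is (1/3,1)-smooth for linear homogeneous valuations.) -/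

import Mathlib

set_option linter.unusedSectionVars false
set_option linter.unusedVariables false
set_option linter.unnecessarySimpa false
set_option maxHeartbeats 1000000


/-- Membership in the polymatroid `P_f` of a set function `f`:
nonnegative vectors whose partial sums are bounded by `f`. -/
def InPolymatroid {E : Type*} [Fintype E] (f : Finset E → ℝ) (x : E → ℝ) : Prop :=
  (∀ t, 0 ≤ x t) ∧ ∀ S : Finset E, (∑ t ∈ S, x t) ≤ f S

section Lemmas
open Finset
variable {E : Type*} [DecidableEq E] [Fintype E]

open Finset
variable {E : Type*} [DecidableEq E] [Fintype E]


noncomputable def layerVal (f : Finset E → ℝ) (c : E → ℝ) : List ℝ → ℝ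
  | a :: b :: rest => (b - a) * f (Finset.univ.filter fun t => a < c t) + layerVal f c (b :: rest)
  | _ => 0

lemma layerVal_cons₂ (f : Finset E → ℝ) (c : E → ℝ) (a b : ℝ) (r : List ℝ) :
    layerVal f c (a :: b :: r) =
      (b - a) * f (Finset.univ.filter fun t => a < c t) + layerVal f c (b :: r) := by
  simp [layerVal]

lemma layerVal_shift (f : Finset E → ℝ) (c c' : E → ℝ) (θ : ℝ)
    (h : ∀ (a : ℝ) (t : E), θ ≤ a → (a < c t ↔ a - θ < c' t)) :
    ∀ L : List ℝ, (∀ a ∈ L, θ ≤ a) → layerVal f c L = layerVal f c' (L.map (· - θ)) := by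
  intro L
  induction L with
  | nil => intro _; simp [layerVal]
  | cons a L ih =>
    intro hmem
    cases L with
    | nil => simp [layerVal]
    | cons b rest =>
      have ha : θ ≤ a := hmem a (by simp)
      have heq : (Finset.univ.filter fun t => a < c t) =
          (Finset.univ.filter fun t => a - θ < c' t) := by
        ext t; simp [h a t ha]
      simp only [List.map_cons, layerVal_cons₂, heq]
      rw [ih (fun x hx => hmem x (List.mem_cons_of_mem _ hx))]
      simp only [List.map_cons]
      ring_nf

lemma layerVal_mono (f : Finset E → ℝ) (hfmono : ∀ S T : Finset E, S ⊆ T → f S ≤ f T)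
    (c d : E → ℝ) (hcd : ∀ t, c t ≤ d t) :
    ∀ L : List ℝ, L.Pairwise (· ≤ ·) → layerVal f c L ≤ layerVal f d L := by
  intro L
  induction L with
  | nil => intro _; simp [layerVal]
  | cons a L ih =>
    intro hs
    cases L with
    | nil => simp [layerVal]
    | cons b rest =>
      rw [layerVal_cons₂, layerVal_cons₂]
      have hab : a ≤ b := (List.pairwise_cons.mp hs).1 b (by simp)
      have hsub : (Finset.univ.filter fun t => a < c t) ⊆ (Finset.univ.filter fun t => a < d t) := by
        intro t ht
        simp only [Finset.mem_filter] at *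
        exact ⟨ht.1, lt_of_lt_of_le ht.2 (hcd t)⟩
      gcongr
      · exact hfmono _ _ hsub
      · exact ih (List.pairwise_cons.mp hs).2

lemma layerVal_submod (f : Finset E → ℝ)
    (hfsub : ∀ S T : Finset E, f (S ∪ T) + f (S ∩ T) ≤ f S + f T)
    (c d : E → ℝ) :
    ∀ L : List ℝ, L.Pairwise (· ≤ ·) →
      layerVal f (fun t => max (c t) (d t)) L + layerVal f (fun t => min (c t) (d t)) L ≤
        layerVal f c L + layerVal f d L := by
  intro L
  induction L with
  | nil => intro _; simp [layerVal]
  | cons a L ih =>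
    intro hs
    cases L with
    | nil => simp [layerVal]
    | cons b rest =>
      simp only [layerVal_cons₂]
      have hab : a ≤ b := (List.pairwise_cons.mp hs).1 b (by simp)
      have hu : (Finset.univ.filter fun t => a < max (c t) (d t)) =
          (Finset.univ.filter fun t => a < c t) ∪ (Finset.univ.filter fun t => a < d t) := by
        ext t; simp [lt_max_iff]
      have hi : (Finset.univ.filter fun t => a < min (c t) (d t)) =
          (Finset.univ.filter fun t => a < c t) ∩ (Finset.univ.filter fun t => a < d t) := by
        ext t; simp [lt_min_iff, and_assoc]
      rw [hu, hi]
      have h1 := hfsub (Finset.univ.filter fun t => a < c t) (Finset.univ.filter fun t => a < d t)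
      have h2 := ih (List.pairwise_cons.mp hs).2
      nlinarith [h1, h2, sub_nonneg.mpr hab]


lemma inPoly_of_le (f : Finset E → ℝ) (y z : E → ℝ) (hz : InPolymatroid f z)
    (h0 : ∀ t, 0 ≤ y t) (h : ∀ t, y t ≤ z t) : InPolymatroid f y :=
  ⟨h0, fun S => (Finset.sum_le_sum (fun t _ => h t)).trans (hz.2 S)⟩

lemma tight_union (f : Finset E → ℝ)
    (hfsub : ∀ S T : Finset E, f (S ∪ T) + f (S ∩ T) ≤ f S + f T)
    (y : E → ℝ) (hy : InPolymatroid f y) (A B : Finset E)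
    (hA : ∑ t ∈ A, y t = f A) (hB : ∑ t ∈ B, y t = f B) :
    ∑ t ∈ A ∪ B, y t = f (A ∪ B) := by
  have h1 := hfsub A B
  have h2 : ∑ t ∈ A ∩ B, y t ≤ f (A ∩ B) := hy.2 _
  have h3 : ∑ t ∈ A ∪ B, y t ≤ f (A ∪ B) := hy.2 _
  have h4 : ∑ t ∈ A ∪ B, y t + ∑ t ∈ A ∩ B, y t = ∑ t ∈ A, y t + ∑ t ∈ B, y t :=
    Finset.sum_union_inter
  linarith

lemma raising_pass (f : Finset E → ℝ)
    (hfmono : ∀ S T : Finset E, S ⊆ T → f S ≤ f T)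
    (S : Finset E) :
    ∀ (l : List E), (∀ s ∈ l, s ∈ S) → ∀ y : E → ℝ, InPolymatroid f y →
      (∀ t ∉ S, y t = 0) →
      ∃ y' : E → ℝ, InPolymatroid f y' ∧ (∀ t, y t ≤ y' t) ∧ (∀ t ∉ S, y' t = 0) ∧
        (∀ s ∈ l, ∃ T : Finset E, T ⊆ S ∧ s ∈ T ∧ ∑ u ∈ T, y' u = f T) := by
  intro l
  induction l with
  | nil =>
    intro _ y hy hsupp
    exact ⟨y, hy, fun t => le_refl _, hsupp, by simp⟩
  | cons s l ih =>
    intro hmem y hy hsupp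
    have hsS : s ∈ S := hmem s (by simp)
    set 𝒜 : Finset (Finset E) := S.powerset.filter (fun T => s ∈ T) with h𝒜
    have hne : 𝒜.Nonempty := ⟨S, by simp [h𝒜, hsS]⟩
    set g : Finset E → ℝ := fun T => f T - ∑ u ∈ T, y u with hg
    set δ : ℝ := 𝒜.inf' hne g with hδ
    have hδ0 : 0 ≤ δ := by
      apply Finset.le_inf'
      intro T hT
      have := hy.2 T
      simp [hg]; linarith
    set y1 : E → ℝ := fun t => if t = s then y t + δ else y t with hy1
    have hy1ge : ∀ t, y t ≤ y1 t := by
      intro t; simp only [hy1]; split 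
      · linarith
      · exact le_rfl
    have hsum : ∀ U : Finset E, ∑ t ∈ U, y1 t = ∑ t ∈ U, y t + (if s ∈ U then δ else 0) := by
      intro U
      have : ∀ t, y1 t = y t + (if t = s then δ else 0) := by
        intro t; simp only [hy1]; split <;> simp
      simp only [this, Finset.sum_add_distrib, Finset.sum_ite_eq' U s (fun _ => δ)]
    have hyU : ∀ U : Finset E, s ∈ U → ∑ t ∈ U, y t = ∑ t ∈ U ∩ S, y t := by
      intro U _
      symm
      apply Finset.sum_subset Finset.inter_subset_left
      intro t ht htn
      exact hsupp t (fun hts => htn (Finset.mem_inter.mpr ⟨ht, hts⟩))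
    have hy1poly : InPolymatroid f y1 := by
      constructor
      · intro t; exact le_trans (hy.1 t) (hy1ge t)
      · intro U
        rw [hsum U]
        by_cases hsU : s ∈ U
        · rw [if_pos hsU]
          have hUS : U ∩ S ∈ 𝒜 := by
            simp [h𝒜, Finset.mem_inter.mpr ⟨hsU, hsS⟩]
          have hδle : δ ≤ g (U ∩ S) := Finset.inf'_le g hUS
          have := hfmono (U ∩ S) U Finset.inter_subset_left
          rw [hyU U hsU]
          simp only [hg] at hδle
          linarith
        · rw [if_neg hsU]; simpa using hy.2 U
    obtain ⟨T₀, hT₀mem, hT₀eq⟩ := Finset.exists_mem_eq_inf' hne g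
    have hT₀S : T₀ ⊆ S := Finset.mem_powerset.mp (Finset.mem_filter.mp hT₀mem).1
    have hsT₀ : s ∈ T₀ := (Finset.mem_filter.mp hT₀mem).2
    have hT₀tight : ∑ u ∈ T₀, y1 u = f T₀ := by
      rw [hsum T₀, if_pos hsT₀]
      have : δ = f T₀ - ∑ u ∈ T₀, y u := by rw [hδ, hT₀eq]
      linarith
    have hy1supp : ∀ t ∉ S, y1 t = 0 := by
      intro t ht
      have : t ≠ s := fun h => ht (h ▸ hsS)
      simp only [hy1, if_neg this]; exact hsupp t ht
    obtain ⟨y', hy'poly, hy'ge, hy'supp, hy'cert⟩ :=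
      ih (fun u hu => hmem u (List.mem_cons_of_mem _ hu)) y1 hy1poly hy1supp
    refine ⟨y', hy'poly, fun t => le_trans (hy1ge t) (hy'ge t), hy'supp, ?_⟩
    intro u hu
    rcases List.mem_cons.mp hu with h | h
    · subst h
      refine ⟨T₀, hT₀S, hsT₀, le_antisymm (hy'poly.2 T₀) ?_⟩
      calc f T₀ = ∑ u ∈ T₀, y1 u := hT₀tight.symm
        _ ≤ ∑ u ∈ T₀, y' u := Finset.sum_le_sum (fun t _ => hy'ge t)
    · exact hy'cert u h

lemma saturate (f : Finset E → ℝ) (hf0 : f ∅ = 0)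
    (hfmono : ∀ S T : Finset E, S ⊆ T → f S ≤ f T)
    (hfsub : ∀ S T : Finset E, f (S ∪ T) + f (S ∩ T) ≤ f S + f T)
    (S : Finset E) (y0 : E → ℝ) (hy0 : InPolymatroid f y0) (hsupp : ∀ t ∉ S, y0 t = 0) :
    ∃ y : E → ℝ, InPolymatroid f y ∧ (∀ t, y0 t ≤ y t) ∧ (∀ t ∉ S, y t = 0) ∧
      ∑ t ∈ S, y t = f S := by
  obtain ⟨y, hypoly, hyge, hysupp, hcert⟩ :=
    raising_pass f hfmono S S.toList (fun s hs => Finset.mem_toList.mp hs) y0 hy0 hsupp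
  have cover : ∀ l : List E, (∀ s ∈ l, ∃ T : Finset E, T ⊆ S ∧ s ∈ T ∧ ∑ u ∈ T, y u = f T) →
      ∃ T : Finset E, T ⊆ S ∧ (∀ s ∈ l, s ∈ T) ∧ ∑ u ∈ T, y u = f T := by
    intro l
    induction l with
    | nil => intro _; exact ⟨∅, Finset.empty_subset _, by simp, by simp [hf0]⟩
    | cons s l ih =>
      intro hl
      obtain ⟨T₁, hT₁S, hsT₁, hT₁⟩ := hl s (by simp)
      obtain ⟨T₂, hT₂S, hT₂mem, hT₂⟩ := ih (fun u hu => hl u (List.mem_cons_of_mem _ hu))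
      refine ⟨T₁ ∪ T₂, Finset.union_subset hT₁S hT₂S, ?_, tight_union f hfsub y hypoly _ _ hT₁ hT₂⟩
      intro u hu
      rcases List.mem_cons.mp hu with h | h
      · exact Finset.mem_union_left _ (h ▸ hsT₁)
      · exact Finset.mem_union_right _ (hT₂mem u h)
  obtain ⟨T, hTS, hTmem, hT⟩ := cover S.toList (fun s hs => hcert s hs)
  have : T = S := by
    apply Finset.Subset.antisymm hTS
    intro u hu
    exact hTmem u (Finset.mem_toList.mpr hu)
  exact ⟨y, hypoly, hyge, hysupp, this ▸ hT⟩
lemma zero_inPoly (f : Finset E → ℝ) (hf0 : f ∅ = 0)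
    (hfmono : ∀ S T : Finset E, S ⊆ T → f S ≤ f T) :
    InPolymatroid f (fun _ => (0:ℝ)) := by
  refine ⟨fun t => le_rfl, fun S => ?_⟩
  have := hfmono ∅ S (Finset.empty_subset S)
  simp [hf0] at this ⊢
  exact this

-- key decomposition facts shared by upper & lower
section decomp
variable (f : Finset E → ℝ) (c : E → ℝ) (θ : ℝ) (rest : List ℝ)

lemma grid_facts (hs : (0 :: θ :: rest).Pairwise (· ≤ ·)) (hmem : ∀ t, c t ∈ (0:ℝ) :: θ :: rest)
    (hθ : 0 < θ) :
    (∀ t, 0 ≤ c t) ∧ (∀ t, 0 < c t → θ ≤ c t) := by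
  have h1 := List.pairwise_cons.mp hs
  constructor
  · intro t
    rcases List.mem_cons.mp (hmem t) with h | h
    · exact le_of_eq h.symm
    · exact h1.1 _ h
  · intro t ht
    have : c t ∈ (θ :: rest) := by
      rcases List.mem_cons.mp (hmem t) with h | h
      · exact absurd h.symm (ne_of_lt ht)
      · exact h
    rcases List.mem_cons.mp this with h | h
    · exact le_of_eq h.symm
    · exact (List.pairwise_cons.mp h1.2).1 _ h

end decomp

lemma le_layerVal (f : Finset E → ℝ) :
    ∀ (k : ℕ) (M : List ℝ) (c : E → ℝ) (y : E → ℝ), M.length ≤ k →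
      ((0:ℝ) :: M).Pairwise (· ≤ ·) → (∀ t, c t ∈ (0:ℝ) :: M) → InPolymatroid f y →
      (∑ t, c t * y t) ≤ layerVal f c ((0:ℝ) :: M) := by
  intro k
  induction k with
  | zero =>
    intro M c y hlen hs hmem hy
    have hM : M = [] := List.length_eq_zero_iff.mp (Nat.le_zero.mp hlen)
    subst hM
    have : ∀ t, c t = 0 := fun t => by simpa using hmem t
    simp [this, layerVal]
  | succ k ih =>
    intro M c y hlen hs hmem hy
    cases M with
    | nil =>
      have : ∀ t, c t = 0 := fun t => by simpa using hmem t
      simp [this, layerVal]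
    | cons θ rest =>
      have h1 := List.pairwise_cons.mp hs
      have hθ0 : 0 ≤ θ := h1.1 θ (by simp)
      rcases eq_or_lt_of_le hθ0 with hθ | hθ
      · -- θ = 0 : drop duplicate head
        have hmem' : ∀ t, c t ∈ (0:ℝ) :: rest := by
          intro t
          rcases List.mem_cons.mp (hmem t) with h | h
          · exact h ▸ List.mem_cons_self
          · rw [← hθ] at h; exact h
        have hs' : ((0:ℝ) :: rest).Pairwise (· ≤ ·) := by rw [hθ]; exact h1.2
        have := ih rest c y (by simp at hlen; omega) hs' hmem' hy
        rw [layerVal_cons₂, ← hθ]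
        simpa using this
      · -- θ > 0
        obtain ⟨hc0, hcθ⟩ := grid_facts c θ rest hs hmem hθ
        set S : Finset E := Finset.univ.filter (fun t => 0 < c t) with hS
        set c' : E → ℝ := fun t => if 0 < c t then c t - θ else 0 with hc'
        have hshift : ∀ (a : ℝ) (t : E), θ ≤ a → (a < c t ↔ a - θ < c' t) := by
          intro a t ha
          by_cases h : 0 < c t
          · simp only [hc', if_pos h]; constructor <;> intro <;> linarith
          · have : c t = 0 := le_antisymm (not_lt.mp h) (hc0 t)
            simp only [hc', if_neg h]
            constructor <;> intro hh <;> [linarith; linarith]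
        have hdecomp : layerVal f c ((0:ℝ) :: θ :: rest) =
            θ * f S + layerVal f c' ((0:ℝ) :: rest.map (· - θ)) := by
          rw [layerVal_cons₂]
          have h0 : layerVal f c (θ :: rest) = layerVal f c' ((θ :: rest).map (· - θ)) := by
            apply layerVal_shift f c c' θ hshift
            intro a ha
            rcases List.mem_cons.mp ha with h | h
            · exact le_of_eq h.symm
            · exact (List.pairwise_cons.mp h1.2).1 _ h
          rw [h0]
          simp only [List.map_cons, sub_self, sub_zero, hS]
        have hmem' : ∀ t, c' t ∈ (0:ℝ) :: rest.map (· - θ) := by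
          intro t
          by_cases h : 0 < c t
          · simp only [hc', if_pos h]
            have hct : c t ∈ (θ :: rest) := by
              rcases List.mem_cons.mp (hmem t) with hh | hh
              · exact absurd hh.symm (ne_of_lt h)
              · exact hh
            rcases List.mem_cons.mp hct with hh | hh
            · rw [hh]; simp
            · exact List.mem_cons_of_mem _ (List.mem_map.mpr ⟨c t, hh, rfl⟩)
          · simp [hc', if_neg h]
        have hs' : ((0:ℝ) :: rest.map (· - θ)).Pairwise (· ≤ ·) := by
          rw [List.pairwise_cons]
          constructor
          · intro x hx
            obtain ⟨a, ha, rfl⟩ := List.mem_map.mp hx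
            have : θ ≤ a := (List.pairwise_cons.mp h1.2).1 _ ha
            linarith
          · have : rest.Pairwise (· ≤ ·) := (List.pairwise_cons.mp h1.2).2
            exact List.Pairwise.map _ (fun hab => by simpa using sub_le_sub_right hab θ) this
        have hsum : (∑ t, c t * y t) = (∑ t, c' t * y t) + θ * ∑ t ∈ S, y t := by
          rw [hS, Finset.sum_filter, Finset.mul_sum, ← Finset.sum_add_distrib]
          apply Finset.sum_congr rfl
          intro t _
          by_cases h : 0 < c t
          · simp only [hc', if_pos h]; ring
          · have : c t = 0 := le_antisymm (not_lt.mp h) (hc0 t)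
            simp [hc', if_neg h, this]
        have hlen' : (rest.map (· - θ)).length ≤ k := by
          simp at hlen ⊢; omega
        have ihh := ih (rest.map (· - θ)) c' y hlen' hs' hmem' hy
        have hSy : ∑ t ∈ S, y t ≤ f S := hy.2 S
        rw [hsum, hdecomp]
        have := mul_le_mul_of_nonneg_left hSy (le_of_lt hθ)
        linarith

lemma layerVal_le (f : Finset E → ℝ) (hf0 : f ∅ = 0)
    (hfmono : ∀ S T : Finset E, S ⊆ T → f S ≤ f T)
    (hfsub : ∀ S T : Finset E, f (S ∪ T) + f (S ∩ T) ≤ f S + f T) :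
    ∀ (k : ℕ) (M : List ℝ) (c : E → ℝ), M.length ≤ k →
      ((0:ℝ) :: M).Pairwise (· ≤ ·) → (∀ t, c t ∈ (0:ℝ) :: M) →
      ∃ y : E → ℝ, InPolymatroid f y ∧ layerVal f c ((0:ℝ) :: M) ≤ ∑ t, c t * y t := by
  intro k
  induction k with
  | zero =>
    intro M c hlen hs hmem
    have hM : M = [] := List.length_eq_zero_iff.mp (Nat.le_zero.mp hlen)
    subst hM
    exact ⟨fun _ => 0, zero_inPoly f hf0 hfmono, by simp [layerVal]⟩
  | succ k ih =>
    intro M c hlen hs hmem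
    cases M with
    | nil => exact ⟨fun _ => 0, zero_inPoly f hf0 hfmono, by simp [layerVal]⟩
    | cons θ rest =>
      have h1 := List.pairwise_cons.mp hs
      have hθ0 : 0 ≤ θ := h1.1 θ (by simp)
      rcases eq_or_lt_of_le hθ0 with hθ | hθ
      · have hmem' : ∀ t, c t ∈ (0:ℝ) :: rest := by
          intro t
          rcases List.mem_cons.mp (hmem t) with h | h
          · exact h ▸ List.mem_cons_self
          · rw [← hθ] at h; exact h
        have hs' : ((0:ℝ) :: rest).Pairwise (· ≤ ·) := by rw [hθ]; exact h1.2
        obtain ⟨y, hy, hval⟩ := ih rest c (by simp at hlen; omega) hs' hmem'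
        refine ⟨y, hy, ?_⟩
        rw [layerVal_cons₂, ← hθ]
        simpa using hval
      · obtain ⟨hc0, hcθ⟩ := grid_facts c θ rest hs hmem hθ
        set S : Finset E := Finset.univ.filter (fun t => 0 < c t) with hS
        set c' : E → ℝ := fun t => if 0 < c t then c t - θ else 0 with hc'
        have hc'0 : ∀ t, 0 ≤ c' t := by
          intro t
          simp only [hc']
          split
          · next h => have := hcθ t h; linarith
          · exact le_rfl
        have hshift : ∀ (a : ℝ) (t : E), θ ≤ a → (a < c t ↔ a - θ < c' t) := by
          intro a t ha
          by_cases h : 0 < c t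
          · simp only [hc', if_pos h]; constructor <;> intro <;> linarith
          · have : c t = 0 := le_antisymm (not_lt.mp h) (hc0 t)
            simp only [hc', if_neg h]
            constructor <;> intro hh <;> [linarith; linarith]
        have hdecomp : layerVal f c ((0:ℝ) :: θ :: rest) =
            θ * f S + layerVal f c' ((0:ℝ) :: rest.map (· - θ)) := by
          rw [layerVal_cons₂]
          have h0 : layerVal f c (θ :: rest) = layerVal f c' ((θ :: rest).map (· - θ)) := by
            apply layerVal_shift f c c' θ hshift
            intro a ha
            rcases List.mem_cons.mp ha with h | h
            · exact le_of_eq h.symm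
            · exact (List.pairwise_cons.mp h1.2).1 _ h
          rw [h0]
          simp only [List.map_cons, sub_self, sub_zero, hS]
        have hmem' : ∀ t, c' t ∈ (0:ℝ) :: rest.map (· - θ) := by
          intro t
          by_cases h : 0 < c t
          · simp only [hc', if_pos h]
            have hct : c t ∈ (θ :: rest) := by
              rcases List.mem_cons.mp (hmem t) with hh | hh
              · exact absurd hh.symm (ne_of_lt h)
              · exact hh
            rcases List.mem_cons.mp hct with hh | hh
            · rw [hh]; simp
            · exact List.mem_cons_of_mem _ (List.mem_map.mpr ⟨c t, hh, rfl⟩)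
          · simp [hc', if_neg h]
        have hs' : ((0:ℝ) :: rest.map (· - θ)).Pairwise (· ≤ ·) := by
          rw [List.pairwise_cons]
          constructor
          · intro x hx
            obtain ⟨a, ha, rfl⟩ := List.mem_map.mp hx
            have : θ ≤ a := (List.pairwise_cons.mp h1.2).1 _ ha
            linarith
          · have : rest.Pairwise (· ≤ ·) := (List.pairwise_cons.mp h1.2).2
            exact List.Pairwise.map _ (fun hab => by simpa using sub_le_sub_right hab θ) this
        have hlen' : (rest.map (· - θ)).length ≤ k := by
          simp at hlen ⊢; omega
        obtain ⟨y', hy', hval'⟩ := ih (rest.map (· - θ)) c' hlen' hs' hmem'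
        -- restrict y' to S
        set y'' : E → ℝ := fun t => if 0 < c t then y' t else 0 with hy''
        have hy''poly : InPolymatroid f y'' := by
          refine ⟨fun t => ?_, fun U => ?_⟩
          · simp only [hy'']; split; exacts [hy'.1 t, le_rfl]
          · refine le_trans (Finset.sum_le_sum (fun t _ => ?_)) (hy'.2 U)
            simp only [hy'']; split; exacts [le_rfl, hy'.1 t]
        have hy''supp : ∀ t ∉ S, y'' t = 0 := by
          intro t ht
          simp only [hS, Finset.mem_filter, Finset.mem_univ, true_and] at ht
          simp [hy'', ht]
        have hval'' : (∑ t, c' t * y'' t) = ∑ t, c' t * y' t := by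
          apply Finset.sum_congr rfl
          intro t _
          by_cases h : 0 < c t
          · simp [hy'', if_pos h]
          · simp [hc', hy'', if_neg h]
        obtain ⟨y, hy, hyge, hysupp, hySsum⟩ := saturate f hf0 hfmono hfsub S y'' hy''poly hy''supp
        refine ⟨y, hy, ?_⟩
        have hsum : (∑ t, c t * y t) = (∑ t, c' t * y t) + θ * ∑ t ∈ S, y t := by
          rw [hS, Finset.sum_filter, Finset.mul_sum, ← Finset.sum_add_distrib]
          apply Finset.sum_congr rfl
          intro t _
          by_cases h : 0 < c t
          · simp only [hc', if_pos h]; ring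
          · have hyt : y t = 0 := hysupp t (by simp [hS, not_lt.mp h, h])
            simp [hc', if_neg h, hyt]
        have hstep : (∑ t, c' t * y'' t) ≤ ∑ t, c' t * y t :=
          Finset.sum_le_sum (fun t _ => mul_le_mul_of_nonneg_left (hyge t) (hc'0 t))
        rw [hsum, hdecomp, hySsum]
        rw [hval''] at hstep
        linarith

end Lemmas

/-- **Smoothness of the first-price greedy polymatroid mechanism for linear
homogeneous valuations.**  `f` is a monotone submodular set function with `f ∅ = 0`,
and `P_f` its polymatroid.  The ground set is partitioned among `n` players via
`player : E → Fin n`; player `i`'s valuation is `Σ_{t ∈ E_i} w_t·x_t`.  `x*` maximizes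
welfare over `P_f`; `x` is the (greedy) outcome maximizing `Σ_t b_t·x_t` over `P_f`
for the bid profile `b`; `xdev i` is any outcome when player `i` unilaterally deviates
to bidding `(2/3)·w_t`.  Then
`Σ_i (1/3)·Σ_{t∈E_i} w_t·(xdev i)_t ≥ (1/3)·Σ_t w_t·x*_t − Σ_t b_t·x_t`,
i.e. the mechanism is `(1/3, 1)`-smooth. -/
theorem greedy_polymatroid_smooth
    {E : Type*} [DecidableEq E] [Fintype E]
    (f : Finset E → ℝ) (hf0 : f ∅ = 0)
    (hfmono : ∀ S T : Finset E, S ⊆ T → f S ≤ f T)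
    (hfsub : ∀ S T : Finset E, f (S ∪ T) + f (S ∩ T) ≤ f S + f T)
    (n : ℕ) (player : E → Fin n)
    (w : E → ℝ) (hw : ∀ t, 0 ≤ w t)
    (xstar : E → ℝ) (hxstar : InPolymatroid f xstar)
    (hxstarOpt : ∀ y : E → ℝ, InPolymatroid f y →
      (∑ t, w t * y t) ≤ ∑ t, w t * xstar t)
    (b : E → ℝ) (hb : ∀ t, 0 ≤ b t)
    (x : E → ℝ) (hx : InPolymatroid f x)
    (hxOpt : ∀ y : E → ℝ, InPolymatroid f y → (∑ t, b t * y t) ≤ ∑ t, b t * x t)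
    (xdev : Fin n → E → ℝ) (hxdev : ∀ i, InPolymatroid f (xdev i))
    (hxdevOpt : ∀ i, ∀ y : E → ℝ, InPolymatroid f y →
      (∑ t, (if player t = i then (2/3) * w t else b t) * y t) ≤
        ∑ t, (if player t = i then (2/3) * w t else b t) * xdev i t) :
    (∑ i : Fin n, (1/3) * ∑ t ∈ Finset.univ.filter (fun t => player t = i), w t * xdev i t) ≥
      (1/3) * (∑ t, w t * xstar t) - ∑ t, b t * x t := by

  classical
  set u : E → ℝ := fun t => (2/3) * w t with hu
  set bi : Fin n → E → ℝ := fun i t => if player t = i then (2/3) * w t else b t with hbi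
  set bmi : Fin n → E → ℝ := fun i t => if player t = i then 0 else b t with hbmi
  set q : Fin n → E → ℝ := fun i t => if player t = i then max ((2/3) * w t) (b t) else b t
    with hq
  set P : Finset (Fin n) → E → ℝ :=
    fun I t => if player t ∈ I then max ((2/3) * w t) (b t) else b t with hP
  set V : Finset ℝ := insert 0 ((Finset.image b Finset.univ) ∪ (Finset.image u Finset.univ))
    with hV
  set L : List ℝ := V.sort (· ≤ ·) with hLdef
  have hLsorted : L.Pairwise (· ≤ ·) := Finset.pairwise_sort _ _
  have hmemL : ∀ r ∈ V, r ∈ L := fun r hr => (Finset.mem_sort _).mpr hr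
  have hVnonneg : ∀ r ∈ V, 0 ≤ r := by
    intro r hr
    simp only [hV, Finset.mem_insert, Finset.mem_union, Finset.mem_image] at hr
    rcases hr with h | ⟨t, _, rfl⟩ | ⟨t, _, rfl⟩
    · exact le_of_eq h.symm
    · exact hb t
    · have := hw t; simp only [hu]; linarith
  have h0L : (0:ℝ) ∈ L := hmemL 0 (Finset.mem_insert_self _ _)
  have hLne : L ≠ [] := fun h => by rw [h] at h0L; simp at h0L
  obtain ⟨a, M, hLM⟩ := List.exists_cons_of_ne_nil hLne
  have ha0 : a = 0 := by
    have haV : a ∈ V := (Finset.mem_sort _).mp (by rw [← hLdef, hLM]; exact List.mem_cons_self)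
    have h1 : 0 ≤ a := hVnonneg a haV
    have h2 : a ≤ 0 := by
      have h0' : (0:ℝ) ∈ a :: M := hLM ▸ h0L
      rcases List.mem_cons.mp h0' with h | h
      · exact le_of_eq h.symm
      · exact (List.pairwise_cons.mp (hLM ▸ hLsorted)).1 0 h
    linarith
  rw [ha0] at hLM
  have hsM : ((0:ℝ) :: M).Pairwise (· ≤ ·) := hLM ▸ hLsorted
  have hmemV : ∀ (c : E → ℝ), (∀ t, c t ∈ V) → ∀ t, c t ∈ (0:ℝ) :: M := by
    intro c hc t
    rw [← hLM]; exact hmemL _ (hc t)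
  have hbV : ∀ t, b t ∈ V := fun t =>
    Finset.mem_insert_of_mem (Finset.mem_union_left _ (Finset.mem_image_of_mem b (Finset.mem_univ t)))
  have huV : ∀ t, u t ∈ V := fun t =>
    Finset.mem_insert_of_mem (Finset.mem_union_right _ (Finset.mem_image_of_mem u (Finset.mem_univ t)))
  have h0V : (0:ℝ) ∈ V := Finset.mem_insert_self _ _
  -- shorthand
  set G : (E → ℝ) → ℝ := fun c => layerVal f c ((0:ℝ) :: M) with hG
  have lower : ∀ c : E → ℝ, (∀ t, c t ∈ V) →
      ∃ y : E → ℝ, InPolymatroid f y ∧ G c ≤ ∑ t, c t * y t := by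
    intro c hc
    exact layerVal_le f hf0 hfmono hfsub M.length M c le_rfl hsM (hmemV c hc)
  have upper : ∀ (c : E → ℝ) (y : E → ℝ), (∀ t, c t ∈ V) → InPolymatroid f y →
      (∑ t, c t * y t) ≤ G c := by
    intro c y hc hy
    exact le_layerVal f M.length M c y le_rfl hsM (hmemV c hc) hy
  -- (1) G (bi i) ≤ D i
  have hDlow : ∀ i, G (bi i) ≤ ∑ t, bi i t * xdev i t := by
    intro i
    obtain ⟨y, hy, hval⟩ := lower (bi i) (fun t => by
      simp only [hbi]; split; exacts [huV t, hbV t])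
    exact hval.trans (hxdevOpt i y hy)
  -- (2) R i ≤ G (bmi i)
  have hRup : ∀ i, (∑ t, bmi i t * xdev i t) ≤ G (bmi i) := by
    intro i
    refine upper (bmi i) (xdev i) (fun t => by
      simp only [hbmi]; split; exacts [h0V, hbV t]) (hxdev i)
  -- (3) G b ≤ ∑ b x
  have hBlow : G b ≤ ∑ t, b t * x t := by
    obtain ⟨y, hy, hval⟩ := lower b hbV
    exact hval.trans (hxOpt y hy)
  -- (4) 2/3 ∑ w xstar ≤ G u
  have hUup : (2/3) * (∑ t, w t * xstar t) ≤ G u := by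
    have h1 : (∑ t, u t * xstar t) ≤ G u := upper u xstar huV hxstar
    have h2 : (∑ t, u t * xstar t) = (2/3) * ∑ t, w t * xstar t := by
      rw [Finset.mul_sum]
      exact Finset.sum_congr rfl (fun t _ => by simp only [hu]; ring)
    linarith
  -- (5) per-player submodularity step
  have hQ : ∀ i, G (q i) - G b ≤ G (bi i) - G (bmi i) := by
    intro i
    have hmax : (fun t => max (bi i t) (b t)) = q i := by
      funext t
      simp only [hbi, hq]
      split
      · rfl
      · exact max_self _
    have hsub := layerVal_submod f hfsub (bi i) b ((0:ℝ) :: M) hsM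
    rw [hmax] at hsub
    have hmono : G (bmi i) ≤ layerVal f (fun t => min (bi i t) (b t)) ((0:ℝ) :: M) := by
      apply layerVal_mono f hfmono _ _ _ ((0:ℝ) :: M) hsM
      intro t
      simp only [hbmi, hbi]
      split
      · next h => exact le_min (by have := hw t; linarith) (hb t)
      · exact (min_self _).ge
    simp only [hG] at *
    linarith
  -- (6) telescoping
  have hPtel : ∀ I : Finset (Fin n), G (P I) - G b ≤ ∑ i ∈ I, (G (q i) - G b) := by
    intro I
    induction I using Finset.induction_on with
    | empty =>
      have : P ∅ = b := by funext t; simp [hP]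
      simp [this]
    | insert j I hj ih =>
      have hmax : (fun t => max (q j t) (P I t)) = P (insert j I) := by
        funext t
        simp only [hq, hP, Finset.mem_insert]
        by_cases h1 : player t = j
        · have h2 : player t ∉ I := fun hm => hj (h1 ▸ hm)
          simp only [if_pos h1, if_neg h2, if_pos (Or.inl h1)]
          exact max_eq_left (le_max_right _ _)
        · by_cases h2 : player t ∈ I
          · simp only [if_neg h1, if_pos h2, if_pos (Or.inr h2)]
            exact max_eq_right (le_max_right _ _)
          · have : ¬(player t = j ∨ player t ∈ I) := by tauto
            simp only [if_neg h1, if_neg h2, if_neg this]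
            exact max_self _
      have hmin : (fun t => min (q j t) (P I t)) = b := by
        funext t
        simp only [hq, hP]
        by_cases h1 : player t = j
        · have h2 : player t ∉ I := fun hm => hj (h1 ▸ hm)
          simp only [if_pos h1, if_neg h2]
          exact min_eq_right (le_max_right _ _)
        · by_cases h2 : player t ∈ I
          · simp only [if_neg h1, if_pos h2]
            exact min_eq_left (le_max_right _ _)
          · simp only [if_neg h1, if_neg h2]
            exact min_self _
      have hsub := layerVal_submod f hfsub (q j) (P I) ((0:ℝ) :: M) hsM
      rw [hmax, hmin] at hsub
      rw [Finset.sum_insert hj]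
      simp only [hG] at *
      linarith
  -- (7) G u ≤ G (P univ)
  have hPu : G u ≤ G (P Finset.univ) := by
    apply layerVal_mono f hfmono _ _ _ ((0:ℝ) :: M) hsM
    intro t
    simp only [hu, hP, Finset.mem_univ, if_true]
    exact le_max_left _ _
  -- split D i
  have hsplit : ∀ i, (∑ t, bi i t * xdev i t) =
      (2/3) * (∑ t ∈ Finset.univ.filter (fun t => player t = i), w t * xdev i t) +
        ∑ t, bmi i t * xdev i t := by
    intro i
    have h1 : ∀ t, bi i t * xdev i t =
        (if player t = i then (2/3) * (w t * xdev i t) else 0) + bmi i t * xdev i t := by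
      intro t
      simp only [hbi, hbmi]
      split <;> ring
    rw [Finset.sum_congr rfl (fun t _ => h1 t), Finset.sum_add_distrib]
    congr 1
    rw [Finset.mul_sum, Finset.sum_filter]
  -- combine
  set Si : Fin n → ℝ := fun i => ∑ t ∈ Finset.univ.filter (fun t => player t = i), w t * xdev i t
    with hSi
  have hkey : ∀ i, G (q i) - G b ≤ (2/3) * Si i := by
    intro i
    have h1 := hDlow i
    have h2 := hRup i
    have h3 := hsplit i
    have h4 := hQ i
    simp only [hSi]
    linarith
  have hsum : G (P Finset.univ) - G b ≤ ∑ i, (2/3) * Si i :=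
    le_trans (hPtel Finset.univ) (Finset.sum_le_sum (fun i _ => hkey i))
  have hB0 : (0:ℝ) ≤ ∑ t, b t * x t :=
    Finset.sum_nonneg (fun t _ => mul_nonneg (hb t) (hx.1 t))
  have hE1 : (∑ i, (2/3) * Si i) = 2 * ∑ i, (1/3) * Si i := by
    rw [Finset.mul_sum]
    exact Finset.sum_congr rfl (fun i _ => by ring)
  have hfinal : (2/3) * (∑ t, w t * xstar t) - (∑ t, b t * x t) ≤ ∑ i, (2/3) * Si i := by
    have := hPu
    have := hUup
    have := hBlow
    linarith
  rw [ge_iff_le]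
  simp only [hSi] at hE1 hfinal
  linarith
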